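/- Suppose v : [0, T] → L^2(-π, π) is a solution of the full linearized equation v_t + (1/6)∂_z[(z^2 - π^2)v] = ∂_z^{-1} v with zero mean, and define E(t) = ∫_{-π}^{π} v(z,t)^2 dz. Then (d/dt)(1/2)E(t) = -(1/6)∫_{-π}^{π} z v(z,t)^2 dz, and consequently E(t) ≤ E(0) e^{πt/3} for all t ∈ [0, T]. -/

import Mathlib

set_option maxHeartbeats 1000000

open Real

theorem full_evolution_energy_bound
    (T : ℝ) (hT : 0 < T)
    (v vt vz g : ℝ → ℝ → ℝ)
    (hv : Continuous fun p : ℝ × ℝ => v p.1 p.2)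
    (hvt : Continuous fun p : ℝ × ℝ => vt p.1 p.2)
    (hvz : Continuous fun p : ℝ × ℝ => vz p.1 p.2)
    (hdt : ∀ t z : ℝ, HasDerivAt (fun t => v t z) (vt t z) t)
    (hdz : ∀ t z : ℝ, HasDerivAt (fun z => v t z) (vz t z) z)
    (hganti : ∀ t z : ℝ, HasDerivAt (fun z => g t z) (v t z) z)
    (hgmean : ∀ t : ℝ, ∫ z in (-π)..π, g t z = 0)
    (hgper : ∀ t : ℝ, g t (-π) = g t π)
    (hvmean : ∀ t : ℝ, ∫ z in (-π)..π, v t z = 0)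
    (hpde : ∀ t ∈ Set.Icc 0 T, ∀ z ∈ Set.Icc (-π) π,
      vt t z + (1 / 6) * ((z ^ 2 - π ^ 2) * vz t z + 2 * z * v t z) = g t z) :
    (∀ t ∈ Set.Icc 0 T,
      HasDerivAt (fun t => (1 / 2) * ∫ z in (-π)..π, (v t z) ^ 2)
        (-(1 / 6) * ∫ z in (-π)..π, z * (v t z) ^ 2) t) ∧
    (∀ t ∈ Set.Icc 0 T,
      (∫ z in (-π)..π, (v t z) ^ 2)
        ≤ (∫ z in (-π)..π, (v 0 z) ^ 2) * Real.exp (π * t / 3)) := by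
  have hpi : (-π : ℝ) ≤ π := by
    have := Real.pi_pos; linarith
  -- continuity in z at fixed t
  have cv : ∀ t : ℝ, Continuous (fun z => v t z) := fun t =>
    hv.comp (continuous_const.prodMk continuous_id)
  have cvt : ∀ t : ℝ, Continuous (fun z => vt t z) := fun t =>
    hvt.comp (continuous_const.prodMk continuous_id)
  have cvz : ∀ t : ℝ, Continuous (fun z => vz t z) := fun t =>
    hvz.comp (continuous_const.prodMk continuous_id)
  have cg : ∀ t : ℝ, Continuous (fun z => g t z) := fun t =>
    Differentiable.continuous (fun z => (hganti t z).differentiableAt)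
  -- Energy and its derivative everywhere
  have hE : ∀ t₀ : ℝ, HasDerivAt (fun t => ∫ z in (-π)..π, (v t z) ^ 2)
      (∫ z in (-π)..π, 2 * v t₀ z * vt t₀ z) t₀ := by
    intro t₀
    -- bound on compact rectangle
    have hK : IsCompact ((Set.Icc (t₀ - 1) (t₀ + 1)) ×ˢ (Set.Icc (-π) π)) :=
      (isCompact_Icc).prod isCompact_Icc
    have hKne : ((Set.Icc (t₀ - 1) (t₀ + 1)) ×ˢ (Set.Icc (-π) π)).Nonempty :=
      ⟨(t₀, π), by constructor <;> constructor <;> linarith⟩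
    have hcont : Continuous (fun p : ℝ × ℝ => |2 * v p.1 p.2 * vt p.1 p.2|) :=
      continuous_abs.comp ((continuous_const.mul hv).mul hvt)
    obtain ⟨p₀, -, hp₀⟩ := hK.exists_isMaxOn hKne hcont.continuousOn
    set M : ℝ := |2 * v p₀.1 p₀.2 * vt p₀.1 p₀.2| with hM
    have hmeas : ∀ᶠ t in nhds t₀,
        MeasureTheory.AEStronglyMeasurable (fun z => (v t z) ^ 2)
          (MeasureTheory.volume.restrict (Set.uIoc (-π) π)) :=
      Filter.Eventually.of_forall fun t => ((cv t).pow 2).aestronglyMeasurable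
    have hFint : IntervalIntegrable (fun z => (v t₀ z) ^ 2) MeasureTheory.volume (-π) π :=
      ((cv t₀).pow 2).intervalIntegrable _ _
    have hF'meas : MeasureTheory.AEStronglyMeasurable (fun z => 2 * v t₀ z * vt t₀ z)
        (MeasureTheory.volume.restrict (Set.uIoc (-π) π)) :=
      ((continuous_const.mul (cv t₀)).mul (cvt t₀)).aestronglyMeasurable
    have hbd : ∀ᵐ z ∂(MeasureTheory.volume : MeasureTheory.Measure ℝ),
        z ∈ Set.uIoc (-π) π → ∀ t ∈ Metric.ball t₀ 1, ‖2 * v t z * vt t z‖ ≤ M := by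
      refine MeasureTheory.ae_of_all _ fun z hz t ht => ?_
      have hz' : z ∈ Set.Icc (-π) π := by
        rw [Set.uIoc_of_le hpi] at hz
        exact ⟨le_of_lt hz.1, hz.2⟩
      have ht' : t ∈ Set.Icc (t₀ - 1) (t₀ + 1) := by
        have := Metric.mem_ball.mp ht
        rw [Real.dist_eq, abs_lt] at this
        constructor <;> linarith
      have hmem : (t, z) ∈ (Set.Icc (t₀ - 1) (t₀ + 1)) ×ˢ (Set.Icc (-π) π) :=
        Set.mem_prod.mpr ⟨ht', hz'⟩
      have := hp₀ hmem
      rw [Real.norm_eq_abs]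
      exact this
    have hbdint : IntervalIntegrable (fun _ : ℝ => M) MeasureTheory.volume (-π) π :=
      intervalIntegrable_const
    have hdiff : ∀ᵐ z ∂(MeasureTheory.volume : MeasureTheory.Measure ℝ),
        z ∈ Set.uIoc (-π) π → ∀ t ∈ Metric.ball t₀ 1,
          HasDerivAt (fun t => (v t z) ^ 2) (2 * v t z * vt t z) t := by
      refine MeasureTheory.ae_of_all _ fun z _ t _ => ?_
      have h := (hdt t z).fun_pow 2
      simpa [pow_one] using h
    have key := intervalIntegral.hasDerivAt_integral_of_dominated_loc_of_deriv_le
      (F := fun t z => (v t z) ^ 2) (F' := fun t z => 2 * v t z * vt t z)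
      (Metric.ball_mem_nhds t₀ one_pos) hmeas hFint hF'meas hbd hbdint hdiff
    exact key.2
  -- the key identity for t ∈ [0, T]
  have hkey : ∀ t ∈ Set.Icc (0 : ℝ) T,
      (∫ z in (-π)..π, 2 * v t z * vt t z)
        = -(1 / 3) * ∫ z in (-π)..π, z * (v t z) ^ 2 := by
    intro t ht
    -- ∫ 2 g v = 0
    have h1 : (∫ z in (-π)..π, 2 * g t z * v t z) = 0 := by
      have := intervalIntegral.integral_eq_sub_of_hasDerivAt
        (a := -π) (b := π)
        (f := fun z => (g t z) ^ 2) (f' := fun z => 2 * g t z * v t z)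
        (fun z _ => by simpa [pow_one] using (hganti t z).fun_pow 2)
        (((continuous_const.mul (cg t)).mul (cv t)).intervalIntegrable _ _)
      rw [this]
      show (g t π) ^ 2 - (g t (-π)) ^ 2 = 0
      rw [hgper t]
      ring
    -- ∫ d/dz [(z²-π²) v²] = 0
    have h2 : (∫ z in (-π)..π,
        (2 * z * (v t z) ^ 2 + (z ^ 2 - π ^ 2) * (2 * v t z * vz t z))) = 0 := by
      have := intervalIntegral.integral_eq_sub_of_hasDerivAt
        (a := -π) (b := π)
        (f := fun z => (z ^ 2 - π ^ 2) * (v t z) ^ 2)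
        (f' := fun z => 2 * z * (v t z) ^ 2 + (z ^ 2 - π ^ 2) * (2 * v t z * vz t z))
        (fun z _ => by
          have hp : HasDerivAt (fun z : ℝ => z ^ 2 - π ^ 2) (2 * z) z := by
            simpa [pow_one] using (hasDerivAt_pow 2 z).sub_const (π ^ 2)
          have hq : HasDerivAt (fun z => (v t z) ^ 2) (2 * v t z * vz t z) z := by
            simpa [pow_one] using (hdz t z).fun_pow 2
          simpa using hp.fun_mul hq)
        (by
          apply Continuous.intervalIntegrable
          continuity)
      rw [this]
      show (π ^ 2 - π ^ 2) * (v t π) ^ 2 - ((-π) ^ 2 - π ^ 2) * (v t (-π)) ^ 2 = 0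
      rw [neg_sq]
      ring
    -- pointwise identity from the PDE
    have hcongr : (∫ z in (-π)..π, 2 * v t z * vt t z)
        = ∫ z in (-π)..π, (2 * g t z * v t z
            - (1 / 6) * (2 * z * (v t z) ^ 2 + (z ^ 2 - π ^ 2) * (2 * v t z * vz t z))
            - (1 / 3) * (z * (v t z) ^ 2)) := by
      apply intervalIntegral.integral_congr
      intro z hz
      have hz' : z ∈ Set.Icc (-π) π := by rwa [Set.uIcc_of_le hpi] at hz
      have hp := hpde t ht z hz'
      have hvt' : vt t z = g t z - (1 / 6) * ((z ^ 2 - π ^ 2) * vz t z + 2 * z * v t z) := by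
        linarith
      show 2 * v t z * vt t z = _
      rw [hvt']
      ring
    rw [hcongr]
    rw [intervalIntegral.integral_sub, intervalIntegral.integral_sub, h1,
      intervalIntegral.integral_const_mul, intervalIntegral.integral_const_mul, h2]
    · ring
    · exact ((continuous_const.mul (cg t)).mul (cv t)).intervalIntegrable _ _
    · apply Continuous.intervalIntegrable; continuity
    · apply Continuous.intervalIntegrable; continuity
    · apply Continuous.intervalIntegrable; continuity
  -- derivative of E on [0,T]
  have hE' : ∀ t ∈ Set.Icc (0 : ℝ) T,
      HasDerivAt (fun t => ∫ z in (-π)..π, (v t z) ^ 2)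
        (-(1 / 3) * ∫ z in (-π)..π, z * (v t z) ^ 2) t := by
    intro t ht
    have := hE t
    rwa [hkey t ht] at this
  constructor
  · intro t ht
    have h := (hE' t ht).const_mul (1 / 2 : ℝ)
    exact h.congr_deriv (by ring)
  · -- Grönwall
    intro t ht
    set E : ℝ → ℝ := fun t => ∫ z in (-π)..π, (v t z) ^ 2 with hEdef
    have hEnn : ∀ s : ℝ, 0 ≤ E s := fun s =>
      intervalIntegral.integral_nonneg hpi (fun z _ => sq_nonneg _)
    have hbound : ∀ s : ℝ, |∫ z in (-π)..π, z * (v s z) ^ 2| ≤ π * E s := by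
      intro s
      calc |∫ z in (-π)..π, z * (v s z) ^ 2|
          ≤ ∫ z in (-π)..π, |z * (v s z) ^ 2| :=
            intervalIntegral.abs_integral_le_integral_abs hpi
        _ ≤ ∫ z in (-π)..π, π * (v s z) ^ 2 := by
            apply intervalIntegral.integral_mono_on hpi
            · apply Continuous.intervalIntegrable; continuity
            · apply Continuous.intervalIntegrable; continuity
            · intro z hz
              rw [abs_mul, abs_sq]
              have hzabs : |z| ≤ π := by
                rw [abs_le]; exact ⟨hz.1, hz.2⟩
              exact mul_le_mul_of_nonneg_right hzabs (sq_nonneg _)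
        _ = π * E s := intervalIntegral.integral_const_mul _ _
    have hG := norm_le_gronwallBound_of_norm_deriv_right_le
      (f := E) (f' := fun s => -(1 / 3) * ∫ z in (-π)..π, z * (v s z) ^ 2)
      (δ := E 0) (K := π / 3) (ε := 0) (a := 0) (b := T)
      (fun s _ => (hE s).continuousAt.continuousWithinAt)
      (fun s hs => (hE' s ⟨hs.1, hs.2.le⟩).hasDerivWithinAt)
      (by rw [Real.norm_eq_abs, abs_of_nonneg (hEnn 0)])
      (fun s hs => by
        rw [Real.norm_eq_abs, Real.norm_eq_abs, abs_mul, abs_of_nonneg (hEnn s)]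
        have := hbound s
        have habs : |(-(1 / 3) : ℝ)| = 1 / 3 := by norm_num
        rw [habs]
        nlinarith [abs_nonneg (∫ z in (-π)..π, z * (v s z) ^ 2)])
    have := hG t ht
    rw [Real.norm_eq_abs, abs_of_nonneg (hEnn t), sub_zero, gronwallBound_ε0] at this
    calc E t ≤ E 0 * Real.exp (π / 3 * t) := this
      _ = E 0 * Real.exp (π * t / 3) := by ring_nf
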